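/- Let δ > 0, γ > 1/δ, 0 ≤ γ' < 1/δ, and μ > 0 with (1+μ)(γ + γ') < 1. For n > 1 set I_μ(n) = ∫_{n^{−1−μ}}^1 ∫_{n^{−1−μ}}^1 min(1, (min(s,t))^{−γδ} (max(s,t))^{−γ'δ} n^{−δ}) ds dt. Then lim_{n→∞} (−log I_μ(n) / log n) = δ − (1+μ)(γδ − 1). -/

import Mathlib

open Filter

open MeasureTheory Set


lemma integral_rpow_Icc (a p : ℝ) (ha : 0 < a) (ha1 : a ≤ 1) (hp : p ≠ 1) :
    ∫ s in Icc a 1, s ^ (-p) = (1 - a ^ (1 - p)) / (1 - p) := by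
  rw [integral_Icc_eq_integral_Ioc, ← intervalIntegral.integral_of_le ha1,
    integral_rpow (Or.inr ⟨by intro h; apply hp; linarith, by simp [uIcc_of_le ha1]; exact ha⟩)]
  rw [Real.one_rpow, show (-p+1) = (1-p) by ring]

lemma rpow_integrableOn (a q : ℝ) (ha : 0 < a) : IntegrableOn (fun t : ℝ => t ^ (-q)) (Icc a 1) := by
  apply ContinuousOn.integrableOn_Icc
  intro x hx
  exact (Real.continuousAt_rpow_const x (-q)
    (Or.inl (ne_of_gt (lt_of_lt_of_le ha hx.1)))).continuousWithinAt

/-- The double integral. -/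
noncomputable def II (p q a K : ℝ) : ℝ :=
  ∫ s in Icc a 1, ∫ t in Icc a 1, min 1 ((min s t) ^ (-p) * (max s t) ^ (-q) * K)

lemma lower_bound (a p q K : ℝ) (ha : 0 < a) (ha4 : a ≤ 1/4) (hp : 0 ≤ p) (hq : 0 ≤ q)
    (hK : 0 < K) (hL : (2*a) ^ (-p) * K ≤ 1) :
    (2*a) ^ (-p) * K * a / 2 ≤ II p q a K := by
  set f : ℝ → ℝ → ℝ := fun s t => min 1 ((min s t) ^ (-p) * (max s t) ^ (-q) * K) with hf
  have hmeas : Measurable (Function.uncurry f) := by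
    unfold Function.uncurry; fun_prop
  have hfm : ∀ s : ℝ, Measurable (f s) := fun s =>
    hmeas.comp (measurable_prodMk_left)
  have hfnonneg : ∀ s ∈ Icc a 1, ∀ t ∈ Icc a 1, 0 ≤ f s t := by
    intro s hs t ht
    have h1 : (0:ℝ) ≤ min s t := le_min (le_trans ha.le hs.1) (le_trans ha.le ht.1)
    have h2 : (0:ℝ) ≤ max s t := le_trans h1 (min_le_max)
    exact le_min zero_le_one
      (mul_nonneg (mul_nonneg (Real.rpow_nonneg h1 _) (Real.rpow_nonneg h2 _)) hK.le)
  have hfle1 : ∀ s t : ℝ, f s t ≤ 1 := fun s t => min_le_left _ _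
  have hintf : ∀ s ∈ Icc a 1, IntegrableOn (f s) (Icc a 1) := by
    intro s hs
    apply Measure.integrableOn_of_bounded (M := 1) measure_Icc_lt_top.ne
      (hfm s).aestronglyMeasurable
    rw [ae_restrict_iff' measurableSet_Icc]
    refine ae_of_all _ fun t ht => ?_
    rw [Real.norm_eq_abs, abs_le]
    exact ⟨by linarith [hfnonneg s hs t ht], hfle1 s t⟩
  set L := (2*a) ^ (-p) * K with hLdef
  have hL0 : 0 < L := mul_pos (Real.rpow_pos_of_pos (by linarith) _) hK
  have key : ∀ s ∈ Icc a (2*a), ∀ t ∈ Icc (1/2 : ℝ) 1, L ≤ f s t := by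
    intro s hs t ht
    have hs0 : 0 < s := lt_of_lt_of_le ha hs.1
    have hst : s ≤ t := le_trans hs.2 (le_trans (by linarith) ht.1)
    have ht0 : (0:ℝ) < t := lt_of_lt_of_le (by norm_num) ht.1
    rw [hf]
    simp only [min_eq_left hst, max_eq_right hst]
    refine le_min hL ?_
    have h1 : (2*a) ^ (-p) ≤ s ^ (-p) :=
      Real.rpow_le_rpow_of_nonpos hs0 hs.2 (neg_nonpos.2 hp)
    have h2 : (1:ℝ) ≤ t ^ (-q) := by
      have := Real.rpow_le_rpow_of_nonpos ht0 ht.2 (neg_nonpos.2 hq)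
      simpa using this
    calc (2*a) ^ (-p) * K = (2*a) ^ (-p) * 1 * K := by ring
      _ ≤ s ^ (-p) * t ^ (-q) * K := by
          apply mul_le_mul (mul_le_mul h1 h2 zero_le_one (Real.rpow_nonneg hs0.le _)) le_rfl hK.le
          exact mul_nonneg (Real.rpow_nonneg hs0.le _) (by linarith)
  have half_mem : Icc (1/2:ℝ) 1 ⊆ Icc a 1 := Icc_subset_Icc (by linarith) le_rfl
  have inner : ∀ s ∈ Icc a (2*a), L * (1/2) ≤ ∫ t in Icc a 1, f s t := by
    intro s hs
    have hs1 : s ∈ Icc a 1 := ⟨hs.1, le_trans hs.2 (by linarith)⟩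
    have step1 : L * (1/2) ≤ ∫ t in Icc (1/2:ℝ) 1, f s t := by
      have := setIntegral_ge_of_const_le (μ := volume) measurableSet_Icc
        measure_Icc_lt_top.ne (key s hs) ((hintf s hs1).mono_set half_mem)
      have hvol : ((volume (Icc (1/2:ℝ) 1)).toReal) = 1/2 := by
        rw [Real.volume_Icc]; norm_num
      rw [measureReal_def, hvol, smul_eq_mul] at this
      exact (mul_comm L (1/2)).trans_le this
    refine le_trans step1 ?_
    apply setIntegral_mono_set (hintf s hs1) ?_ half_mem.eventuallyLE
    rw [EventuallyLE, ae_restrict_iff' measurableSet_Icc]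
    exact ae_of_all _ fun t ht => hfnonneg s hs1 t ht
  set G : ℝ → ℝ := fun s => ∫ t in Icc a 1, f s t with hG
  have hGm : StronglyMeasurable G :=
    hmeas.stronglyMeasurable.integral_prod_right
  have hGnonneg : ∀ s ∈ Icc a 1, 0 ≤ G s := fun s hs =>
    setIntegral_nonneg measurableSet_Icc (fun t ht => hfnonneg s hs t ht)
  have hGbd : ∀ s ∈ Icc a 1, ‖G s‖ ≤ 1 := by
    intro s hs
    have h1 : ‖G s‖ ≤ 1 * ((volume (Icc a 1)).toReal) := by
      apply norm_setIntegral_le_of_norm_le_const measure_Icc_lt_top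
      intro t ht
      rw [Real.norm_eq_abs, abs_le]
      exact ⟨by linarith [hfnonneg s hs t ht], hfle1 s t⟩
    refine le_trans h1 ?_
    rw [one_mul, Real.volume_Icc, ENNReal.toReal_ofReal (by linarith)]
    linarith
  have hGint : IntegrableOn G (Icc a 1) := by
    apply Measure.integrableOn_of_bounded (M := 1) measure_Icc_lt_top.ne
      hGm.aestronglyMeasurable
    rw [ae_restrict_iff' measurableSet_Icc]
    exact ae_of_all _ hGbd
  have sub2 : Icc a (2*a) ⊆ Icc a 1 := Icc_subset_Icc le_rfl (by linarith)
  have step2 : (L * (1/2)) * a ≤ ∫ s in Icc a (2*a), G s := by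
    have := setIntegral_ge_of_const_le (μ := volume) measurableSet_Icc
      measure_Icc_lt_top.ne inner (hGint.mono_set sub2)
    have hvol : ((volume (Icc a (2*a))).toReal) = a := by
      rw [Real.volume_Icc, show 2*a - a = a by ring, ENNReal.toReal_ofReal ha.le]
    rw [measureReal_def, hvol, smul_eq_mul] at this
    exact (mul_comm (L * (1/2)) a).trans_le this
  have step3 : ∫ s in Icc a (2*a), G s ≤ ∫ s in Icc a 1, G s := by
    apply setIntegral_mono_set hGint ?_ sub2.eventuallyLE
    rw [EventuallyLE, ae_restrict_iff' measurableSet_Icc]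
    exact ae_of_all _ hGnonneg
  calc L * a / 2 = (L * (1/2)) * a := by ring
    _ ≤ ∫ s in Icc a (2*a), G s := step2
    _ ≤ ∫ s in Icc a 1, G s := step3

lemma upper_bound (a p q K : ℝ) (ha : 0 < a) (ha1 : a ≤ 1) (hp : 1 < p) (hq0 : 0 ≤ q)
    (hq : q < 1) (hK : 0 < K) :
    II p q a K ≤ 2 * K * (a ^ (1-p) / (p-1)) * (1/(1-q)) := by
  set f : ℝ → ℝ → ℝ := fun s t => min 1 ((min s t) ^ (-p) * (max s t) ^ (-q) * K) with hf
  have hmeas : Measurable (Function.uncurry f) := by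
    unfold Function.uncurry; fun_prop
  have hfm : ∀ s : ℝ, Measurable (f s) := fun s => hmeas.comp (measurable_prodMk_left)
  have hfnonneg : ∀ s ∈ Icc a 1, ∀ t ∈ Icc a 1, 0 ≤ f s t := by
    intro s hs t ht
    have h1 : (0:ℝ) ≤ min s t := le_min (le_trans ha.le hs.1) (le_trans ha.le ht.1)
    have h2 : (0:ℝ) ≤ max s t := le_trans h1 min_le_max
    exact le_min zero_le_one
      (mul_nonneg (mul_nonneg (Real.rpow_nonneg h1 _) (Real.rpow_nonneg h2 _)) hK.le)
  have hfle1 : ∀ s t : ℝ, f s t ≤ 1 := fun s t => min_le_left _ _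
  have hintf : ∀ s ∈ Icc a 1, IntegrableOn (f s) (Icc a 1) := by
    intro s hs
    apply Measure.integrableOn_of_bounded (M := 1) measure_Icc_lt_top.ne
      (hfm s).aestronglyMeasurable
    rw [ae_restrict_iff' measurableSet_Icc]
    refine ae_of_all _ fun t ht => ?_
    rw [Real.norm_eq_abs, abs_le]
    exact ⟨by linarith [hfnonneg s hs t ht], hfle1 s t⟩
  set Sg : ℝ := ∫ s in Icc a 1, s ^ (-p) with hSg
  set Sh : ℝ := ∫ t in Icc a 1, t ^ (-q) with hSh
  have hSg0 : 0 ≤ Sg := setIntegral_nonneg measurableSet_Icc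
    (fun x hx => Real.rpow_nonneg (le_trans ha.le hx.1) _)
  have hSh0 : 0 ≤ Sh := setIntegral_nonneg measurableSet_Icc
    (fun x hx => Real.rpow_nonneg (le_trans ha.le hx.1) _)
  have hSg_le : Sg ≤ a ^ (1-p) / (p-1) := by
    rw [hSg, integral_rpow_Icc a p ha ha1 (by linarith)]
    have hne1 : (1:ℝ) - p ≠ 0 := by intro h; linarith
    have hne2 : p - 1 ≠ 0 := by intro h; linarith
    have heq : (1 - a ^ (1-p))/(1-p) = (a ^ (1-p) - 1)/(p-1) := by
      field_simp; ring
    rw [heq]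
    apply div_le_div_of_nonneg_right (by linarith) (by linarith)
  have hSh_le : Sh ≤ 1 / (1-q) := by
    rw [hSh, integral_rpow_Icc a q ha ha1 (by linarith)]
    have h1 : (0:ℝ) ≤ a ^ (1-q) := Real.rpow_nonneg ha.le _
    apply div_le_div_of_nonneg_right (by linarith) (by linarith)
  have pointwise : ∀ s ∈ Icc a 1, ∀ t ∈ Icc a 1,
      f s t ≤ (K * s ^ (-p)) * t ^ (-q) + (K * s ^ (-q)) * t ^ (-p) := by
    intro s hs t ht
    have hs0 : 0 < s := lt_of_lt_of_le ha hs.1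
    have ht0 : 0 < t := lt_of_lt_of_le ha ht.1
    refine le_trans (min_le_right _ _) ?_
    rcases le_total s t with hst | hst
    · rw [min_eq_left hst, max_eq_right hst]
      nlinarith [Real.rpow_nonneg hs0.le (-q), Real.rpow_nonneg ht0.le (-p),
        Real.rpow_nonneg hs0.le (-p), Real.rpow_nonneg ht0.le (-q), hK.le,
        mul_nonneg (mul_nonneg hK.le (Real.rpow_nonneg hs0.le (-q))) (Real.rpow_nonneg ht0.le (-p))]
    · rw [min_eq_right hst, max_eq_left hst]
      nlinarith [mul_nonneg (mul_nonneg hK.le (Real.rpow_nonneg hs0.le (-p))) (Real.rpow_nonneg ht0.le (-q))]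
  have hbigint : ∀ s : ℝ, IntegrableOn
      (fun t => (K * s ^ (-p)) * t ^ (-q) + (K * s ^ (-q)) * t ^ (-p)) (Icc a 1) := by
    intro s
    exact ((rpow_integrableOn a q ha).const_mul _).add ((rpow_integrableOn a p ha).const_mul _)
  have inner : ∀ s ∈ Icc a 1,
      (∫ t in Icc a 1, f s t) ≤ (K * s ^ (-p)) * Sh + (K * s ^ (-q)) * Sg := by
    intro s hs
    have h1 : (∫ t in Icc a 1, f s t) ≤
        ∫ t in Icc a 1, ((K * s ^ (-p)) * t ^ (-q) + (K * s ^ (-q)) * t ^ (-p)) :=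
      setIntegral_mono_on (hintf s hs) (hbigint s) measurableSet_Icc (pointwise s hs)
    refine le_trans h1 (le_of_eq ?_)
    rw [integral_add ((rpow_integrableOn a q ha).const_mul _) ((rpow_integrableOn a p ha).const_mul _),
      integral_const_mul, integral_const_mul]
  set G : ℝ → ℝ := fun s => ∫ t in Icc a 1, f s t with hG
  have hGm : StronglyMeasurable G := hmeas.stronglyMeasurable.integral_prod_right
  have hGint : IntegrableOn G (Icc a 1) := by
    apply Measure.integrableOn_of_bounded (M := 1) measure_Icc_lt_top.ne
      hGm.aestronglyMeasurable
    rw [ae_restrict_iff' measurableSet_Icc]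
    refine ae_of_all _ fun s hs => ?_
    have h1 : ‖G s‖ ≤ 1 * ((volume (Icc a 1)).toReal) := by
      apply norm_setIntegral_le_of_norm_le_const measure_Icc_lt_top
      intro t ht
      rw [Real.norm_eq_abs, abs_le]
      exact ⟨by linarith [hfnonneg s hs t ht], hfle1 s t⟩
    refine le_trans h1 ?_
    rw [one_mul, Real.volume_Icc, ENNReal.toReal_ofReal (by linarith)]
    linarith
  have outer : (∫ s in Icc a 1, G s) ≤ (K * Sh) * Sg + (K * Sg) * Sh := by
    have h1 : (∫ s in Icc a 1, G s) ≤
        ∫ s in Icc a 1, ((K * Sh) * s ^ (-p) + (K * Sg) * s ^ (-q)) := by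
      apply setIntegral_mono_on (g := fun s => (K * Sh) * s ^ (-p) + (K * Sg) * s ^ (-q)) hGint
        (((rpow_integrableOn a p ha).const_mul _).add ((rpow_integrableOn a q ha).const_mul _))
        measurableSet_Icc
      intro s hs
      refine le_trans (inner s hs) (le_of_eq (by ring))
    refine le_trans h1 (le_of_eq ?_)
    rw [integral_add ((rpow_integrableOn a p ha).const_mul _) ((rpow_integrableOn a q ha).const_mul _),
      integral_const_mul, integral_const_mul]
  refine le_trans outer ?_
  have key : K * Sg * Sh ≤ K * (a ^ (1-p) / (p-1)) * (1/(1-q)) := by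
    have h1 : 0 ≤ a ^ (1-p) / (p-1) :=
      div_nonneg (Real.rpow_nonneg ha.le _) (by linarith)
    calc K * Sg * Sh ≤ K * (a ^ (1-p) / (p-1)) * Sh := by
          apply mul_le_mul_of_nonneg_right (mul_le_mul_of_nonneg_left hSg_le hK.le) hSh0
      _ ≤ K * (a ^ (1-p) / (p-1)) * (1/(1-q)) := by
          apply mul_le_mul_of_nonneg_left hSh_le (mul_nonneg hK.le h1)
  calc (K * Sh) * Sg + (K * Sg) * Sh = K * Sg * Sh + K * Sg * Sh := by ring
    _ ≤ K * (a ^ (1-p) / (p-1)) * (1/(1-q)) + K * (a ^ (1-p) / (p-1)) * (1/(1-q)) := by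
        linarith [key]
    _ = 2 * K * (a ^ (1-p) / (p-1)) * (1/(1-q)) := by ring

lemma II_bounds (δ γ γ' μ : ℝ) (hδ : 0 < δ)
    (hγ : 1 / δ < γ) (hγ'0 : 0 ≤ γ') (hγ' : γ' < 1 / δ)
    (hμ : 0 < μ) (hsum : (1 + μ) * (γ + γ') < 1)
    (n : ℝ) (hn2 : 2 ≤ n) (hn4 : n ^ (-1-μ) ≤ 1/4) :
    (2:ℝ) ^ (-(γ*δ)) / 2 * n ^ (-(δ - (1+μ)*(γ*δ-1)))
      ≤ II (γ*δ) (γ'*δ) (n ^ (-1-μ)) (n ^ (-δ)) ∧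
    II (γ*δ) (γ'*δ) (n ^ (-1-μ)) (n ^ (-δ))
      ≤ 2 / ((γ*δ-1)*(1-γ'*δ)) * n ^ (-(δ - (1+μ)*(γ*δ-1))) := by
  have hp1 : 1 < γ * δ := (div_lt_iff₀ hδ).mp hγ
  have hq1 : γ' * δ < 1 := (lt_div_iff₀ hδ).mp hγ'
  have hq0 : 0 ≤ γ' * δ := mul_nonneg hγ'0 hδ.le
  have hp0 : (0:ℝ) ≤ γ * δ := by linarith
  have hn0 : (0:ℝ) < n := by linarith
  have hn1 : (1:ℝ) ≤ n := by linarith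
  have ha0 : 0 < n ^ (-1-μ) := Real.rpow_pos_of_pos hn0 _
  have ha1 : n ^ (-1-μ) ≤ 1 := le_trans hn4 (by norm_num)
  have hK0 : 0 < n ^ (-δ) := Real.rpow_pos_of_pos hn0 _
  have hμγ' : 0 ≤ (1+μ) * γ' := mul_nonneg (by linarith) hγ'0
  have hg1 : (1+μ) * γ < 1 := by nlinarith
  have hep : (1+μ)*(γ*δ) < δ := by
    calc (1+μ)*(γ*δ) = ((1+μ)*γ)*δ := by ring
      _ < 1*δ := mul_lt_mul_of_pos_right hg1 hδ
      _ = δ := one_mul δ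
  have hL : (2 * n ^ (-1-μ)) ^ (-(γ*δ)) * n ^ (-δ) ≤ 1 := by
    rw [Real.mul_rpow (by norm_num) ha0.le, ← Real.rpow_mul hn0.le, mul_assoc,
      ← Real.rpow_add hn0]
    have h1 : (2:ℝ) ^ (-(γ*δ)) ≤ 1 :=
      Real.rpow_le_one_of_one_le_of_nonpos one_le_two (by linarith)
    have h2 : n ^ ((-1-μ)*(-(γ*δ)) + -δ) ≤ 1 := by
      apply Real.rpow_le_one_of_one_le_of_nonpos hn1
      have : (-1-μ)*(-(γ*δ)) + -δ = (1+μ)*(γ*δ) - δ := by ring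
      rw [this]; linarith
    exact mul_le_one₀ h1 (Real.rpow_pos_of_pos hn0 _).le h2
  constructor
  · refine le_trans (le_of_eq ?_)
      (lower_bound (n ^ (-1-μ)) (γ*δ) (γ'*δ) (n ^ (-δ)) ha0 hn4 hp0 hq0 hK0 hL)
    rw [Real.mul_rpow (by norm_num) ha0.le, ← Real.rpow_mul hn0.le]
    have e : n ^ (-(δ - (1+μ)*(γ*δ-1))) = n ^ ((-1-μ)*(-(γ*δ))) * n ^ (-δ) * n ^ (-1-μ) := by
      rw [← Real.rpow_add hn0, ← Real.rpow_add hn0]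
      congr 1; ring
    rw [e]; ring
  · refine le_trans
      (upper_bound (n ^ (-1-μ)) (γ*δ) (γ'*δ) (n ^ (-δ)) ha0 ha1 hp1 hq0 hq1 hK0)
      (le_of_eq ?_)
    rw [← Real.rpow_mul hn0.le]
    have e : n ^ (-(δ - (1+μ)*(γ*δ-1))) = n ^ (-δ) * n ^ ((-1-μ)*(1-γ*δ)) := by
      rw [← Real.rpow_add hn0]
      congr 1; ring
    have hne1 : γ*δ - 1 ≠ 0 := by intro h; linarith
    have hne2 : 1 - γ'*δ ≠ 0 := by intro h; linarith
    rw [e]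
    field_simp

/-- The quantity `ψ⁻(μ)` for the interpolation kernel with long-range profile in
the regime `γ > 1/δ > γ'`: with mark cutoff `n^(-1-μ)`, one has
`-log I_μ(n)/log n → δ - (1+μ)(γδ - 1)` for
`I_μ(n) = ∫∫_{[n^(-1-μ),1]²} min(1, (s∧t)^(-γδ)(s∨t)^(-γ'δ) n^(-δ)) ds dt`. -/
theorem psi_minus_large_gamma (δ γ γ' μ : ℝ) (hδ : 0 < δ)
    (hγ : 1 / δ < γ) (hγ'0 : 0 ≤ γ') (hγ' : γ' < 1 / δ)
    (hμ : 0 < μ) (hsum : (1 + μ) * (γ + γ') < 1) :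
    Tendsto (fun n : ℝ =>
      -Real.log (∫ s in Set.Icc (n ^ (-1 - μ)) 1, ∫ t in Set.Icc (n ^ (-1 - μ)) 1,
          min 1 ((min s t) ^ (-(γ * δ)) * (max s t) ^ (-(γ' * δ)) * n ^ (-δ)))
        / Real.log n) atTop (nhds (δ - (1 + μ) * (γ * δ - 1))) := by
  
  have hp1 : 1 < γ * δ := (div_lt_iff₀ hδ).mp hγ
  have hq1 : γ' * δ < 1 := (lt_div_iff₀ hδ).mp hγ'
  set ψ : ℝ := δ - (1 + μ) * (γ * δ - 1) with hψ
  set c0 : ℝ := (2:ℝ) ^ (-(γ*δ)) / 2 with hc0def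
  set C0 : ℝ := 2 / ((γ*δ-1)*(1-γ'*δ)) with hC0def
  have hc0 : 0 < c0 := by
    rw [hc0def]; positivity
  have hC0 : 0 < C0 := div_pos two_pos (mul_pos (by linarith) (by linarith))
  have hev : ∀ᶠ n : ℝ in atTop, 2 ≤ n ∧ n ^ (-1-μ) ≤ 1/4 := by
    have h1 : Tendsto (fun n : ℝ => n ^ (-1-μ)) atTop (nhds 0) := by
      have := tendsto_rpow_neg_atTop (y := 1+μ) (by linarith)
      simpa [show -(1+μ) = -1-μ by ring] using this
    exact (eventually_ge_atTop 2).and (h1.eventually (eventually_le_nhds (by norm_num)))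
  apply tendsto_of_tendsto_of_tendsto_of_le_of_le'
    (g := fun n : ℝ => ψ - Real.log C0 / Real.log n)
    (h := fun n : ℝ => ψ - Real.log c0 / Real.log n)
  · have h2 : Tendsto (fun n : ℝ => Real.log C0 / Real.log n) atTop (nhds 0) :=
      Tendsto.div_atTop tendsto_const_nhds Real.tendsto_log_atTop
    simpa using (tendsto_const_nhds (x := ψ) (f := atTop)).sub h2
  · have h2 : Tendsto (fun n : ℝ => Real.log c0 / Real.log n) atTop (nhds 0) :=
      Tendsto.div_atTop tendsto_const_nhds Real.tendsto_log_atTop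
    simpa using (tendsto_const_nhds (x := ψ) (f := atTop)).sub h2
  · filter_upwards [hev] with n hn
    obtain ⟨hn2, hn4⟩ := hn
    have hn0 : (0:ℝ) < n := by linarith
    have hlogn : 0 < Real.log n := Real.log_pos (by linarith)
    obtain ⟨hlow, hup⟩ := II_bounds δ γ γ' μ hδ hγ hγ'0 hγ' hμ hsum n hn2 hn4
    have hIeq : (∫ s in Set.Icc (n ^ (-1 - μ)) 1, ∫ t in Set.Icc (n ^ (-1 - μ)) 1,
        min 1 ((min s t) ^ (-(γ * δ)) * (max s t) ^ (-(γ' * δ)) * n ^ (-δ)))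
        = II (γ*δ) (γ'*δ) (n ^ (-1-μ)) (n ^ (-δ)) := by
      rfl
    rw [hIeq]
    set I := II (γ*δ) (γ'*δ) (n ^ (-1-μ)) (n ^ (-δ)) with hI
    have hI0 : 0 < I :=
      lt_of_lt_of_le (mul_pos hc0 (Real.rpow_pos_of_pos hn0 _)) hlow
    have h2 : Real.log I ≤ Real.log C0 + (-ψ) * Real.log n := by
      have h3 := Real.log_le_log hI0 hup
      rwa [Real.log_mul (ne_of_gt hC0) (ne_of_gt (Real.rpow_pos_of_pos hn0 _)),
        Real.log_rpow hn0] at h3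
    have h4 : ψ * Real.log n - Real.log C0 ≤ -Real.log I := by linarith
    calc ψ - Real.log C0 / Real.log n
        = (ψ * Real.log n - Real.log C0) / Real.log n := by
          field_simp
      _ ≤ -Real.log I / Real.log n := by gcongr
  · filter_upwards [hev] with n hn
    obtain ⟨hn2, hn4⟩ := hn
    have hn0 : (0:ℝ) < n := by linarith
    have hlogn : 0 < Real.log n := Real.log_pos (by linarith)
    obtain ⟨hlow, hup⟩ := II_bounds δ γ γ' μ hδ hγ hγ'0 hγ' hμ hsum n hn2 hn4
    have hIeq : (∫ s in Set.Icc (n ^ (-1 - μ)) 1, ∫ t in Set.Icc (n ^ (-1 - μ)) 1,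
        min 1 ((min s t) ^ (-(γ * δ)) * (max s t) ^ (-(γ' * δ)) * n ^ (-δ)))
        = II (γ*δ) (γ'*δ) (n ^ (-1-μ)) (n ^ (-δ)) := by
      rfl
    rw [hIeq]
    set I := II (γ*δ) (γ'*δ) (n ^ (-1-μ)) (n ^ (-δ)) with hI
    have hI0 : 0 < I :=
      lt_of_lt_of_le (mul_pos hc0 (Real.rpow_pos_of_pos hn0 _)) hlow
    have h2 : Real.log c0 + (-ψ) * Real.log n ≤ Real.log I := by
      have h3 := Real.log_le_log (mul_pos hc0 (Real.rpow_pos_of_pos hn0 _)) hlow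
      rwa [Real.log_mul (ne_of_gt hc0) (ne_of_gt (Real.rpow_pos_of_pos hn0 _)),
        Real.log_rpow hn0] at h3
    have h4 : -Real.log I ≤ ψ * Real.log n - Real.log c0 := by linarith
    calc -Real.log I / Real.log n
        ≤ (ψ * Real.log n - Real.log c0) / Real.log n := by gcongr
      _ = ψ - Real.log c0 / Real.log n := by field_simp
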